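/- Let N = 2M be a positive even integer, μ > 0, and α ∈ (0,1). Define N×N complex matrices D₁ and D₂ with entries indexed by j, l ∈ {0, 1, …, N−1}: (D₁)_{j,l} = (1/N) Σ_{k=−M}^{M} (1/c_k) · i·(kμ)·|kμ|^{α−1} · exp(2πi·k·(j−l)/N) and (D₂)_{j,l} = −(1/N) Σ_{k=−M}^{M} (1/c_k) · |kμ|^{2α} · exp(2πi·k·(j−l)/N), where c_k = 1 for |k| < M, c_k = 2 for k = ±M, and the k = 0 term of the first sum is taken to be 0. Then for all j, l: (D₂)_{j,l} = (D₁²)_{j,l} − (−1)^{j+l} · (1/N) · (Mμ)^{2α}, where D₁² = D₁·D₁ is the matrix product. -/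

import Mathlib

open Complex Finset

private lemma geom_orth (N : ℕ) (hN : 0 < N) (d : ℤ) :
    ∑ m ∈ Finset.range N, Complex.exp (2 * (Real.pi : ℂ) * Complex.I * d / N) ^ m
      = if (N : ℤ) ∣ d then (N : ℂ) else 0 := by
  have hNc : ((N : ℕ) : ℂ) ≠ 0 := Nat.cast_ne_zero.mpr hN.ne'
  by_cases h : (N : ℤ) ∣ d
  · obtain ⟨t, rfl⟩ := h
    have h1 : Complex.exp (2 * (Real.pi : ℂ) * Complex.I * (((N : ℤ) * t : ℤ) : ℂ) / N) = 1 := by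
      rw [show (2 * (Real.pi : ℂ) * Complex.I * (((N : ℤ) * t : ℤ) : ℂ) / N)
          = t * (2 * (Real.pi : ℂ) * Complex.I) by push_cast; field_simp]
      exact Complex.exp_int_mul_two_pi_mul_I t
    rw [if_pos (Dvd.intro t rfl)]
    push_cast at h1 ⊢
    simp [h1]
  · rw [if_neg h]
    set z := Complex.exp (2 * (Real.pi : ℂ) * Complex.I * d / N) with hz
    have hpi : (Real.pi : ℂ) ≠ 0 := Complex.ofReal_ne_zero.mpr Real.pi_ne_zero
    have hz1 : z ≠ 1 := by
      intro hzz
      rw [hz, Complex.exp_eq_one_iff] at hzz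
      obtain ⟨n, hn⟩ := hzz
      apply h
      have h2 : (d : ℂ) = n * N := by
        field_simp at hn
        have h2' : (d : ℂ) * (2 * (Real.pi:ℂ) * Complex.I)
            = (n : ℂ) * (N:ℂ) * (2 * (Real.pi:ℂ) * Complex.I) := by linear_combination (2 * (Real.pi:ℂ) * Complex.I) * hn
        exact mul_right_cancel₀ (by simp [hpi, Complex.I_ne_zero]) h2'
      have h3 : d = n * N := by exact_mod_cast h2
      exact ⟨n, by rw [h3, mul_comm]⟩
    have hzN : z ^ N = 1 := by
      rw [hz, ← Complex.exp_nat_mul,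
        show (N : ℂ) * (2 * (Real.pi : ℂ) * Complex.I * d / N)
          = d * (2 * (Real.pi : ℂ) * Complex.I) by field_simp]
      exact Complex.exp_int_mul_two_pi_mul_I d
    rw [geom_sum_eq hz1, hzN]
    simp

private lemma dvd_char (M : ℕ) (hM : 0 < M) (k k' : ℤ) (h1 : -(M:ℤ) ≤ k) (h2 : k ≤ M)
    (h3 : -(M:ℤ) ≤ k') (h4 : k' ≤ M) :
    ((2 * M : ℕ) : ℤ) ∣ (k' - k) ↔ (k' = k ∨ (k = M ∧ k' = -M) ∨ (k = -M ∧ k' = M)) := by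
  have hM' : (0:ℤ) < (M:ℤ) := by exact_mod_cast hM
  constructor
  · rintro ⟨t, ht⟩
    push_cast at ht
    have hub : t ≤ 1 := by nlinarith
    have hlb : -1 ≤ t := by nlinarith
    interval_cases t <;> omega
  · rintro (h | ⟨hk, hk'⟩ | ⟨hk, hk'⟩)
    · exact ⟨0, by omega⟩
    · exact ⟨-1, by push_cast; omega⟩
    · exact ⟨1, by push_cast; omega⟩

private lemma sign_lemma (M : ℕ) (hM : 0 < M) (t : ℤ) :
    Complex.exp (2 * (Real.pi : ℂ) * Complex.I * (((M:ℤ) * t : ℤ) : ℂ) / ((2 * M : ℕ) : ℂ))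
      = (-1 : ℂ) ^ t := by
  have hMc : ((M : ℕ) : ℂ) ≠ 0 := Nat.cast_ne_zero.mpr hM.ne'
  rw [show (2 * (Real.pi : ℂ) * Complex.I * (((M:ℤ) * t : ℤ) : ℂ) / ((2 * M : ℕ) : ℂ))
      = t * ((Real.pi : ℂ) * Complex.I) by push_cast; field_simp]
  rw [Complex.exp_int_mul, Complex.exp_pi_mul_I]

private lemma neg_one_zpow_neg (t : ℤ) : (-1 : ℂ) ^ (-t) = (-1 : ℂ) ^ t := by
  rw [zpow_neg]
  refine inv_eq_of_mul_eq_one_right ?_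
  rw [← mul_zpow]
  norm_num

/-- For the Fourier pseudospectral matrices `D₁`, `D₂` on `N = 2M` points,
`(D₂)_{j,l} = (D₁²)_{j,l} − (−1)^{j+l} (1/N) (Mμ)^{2α}`. -/
theorem stmt_6 (M : ℕ) (hM : 0 < M) (μ α : ℝ) (hμ : 0 < μ) (hα : α ∈ Set.Ioo (0 : ℝ) 1)
    (c : ℤ → ℂ) (hc : ∀ k : ℤ, c k = if k = (M : ℤ) ∨ k = -(M : ℤ) then 2 else 1)
    (D₁ D₂ : Matrix (Fin (2 * M)) (Fin (2 * M)) ℂ)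
    (hD₁ : ∀ j l : Fin (2 * M), D₁ j l =
      (1 / ((2 * M : ℕ) : ℂ)) * ∑ k ∈ Finset.Icc (-(M : ℤ)) (M : ℤ),
        (1 / c k) * (Complex.I * (((k : ℝ) * μ : ℝ) : ℂ)
            * ((|(k : ℝ) * μ| ^ (α - 1) : ℝ) : ℂ))
          * Complex.exp (2 * (Real.pi : ℂ) * Complex.I * (k : ℂ)
              * (((j : ℕ) : ℂ) - ((l : ℕ) : ℂ)) / ((2 * M : ℕ) : ℂ)))
    (hD₂ : ∀ j l : Fin (2 * M), D₂ j l =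
      -((1 / ((2 * M : ℕ) : ℂ)) * ∑ k ∈ Finset.Icc (-(M : ℤ)) (M : ℤ),
        (1 / c k) * ((|(k : ℝ) * μ| ^ (2 * α) : ℝ) : ℂ)
          * Complex.exp (2 * (Real.pi : ℂ) * Complex.I * (k : ℂ)
              * (((j : ℕ) : ℂ) - ((l : ℕ) : ℂ)) / ((2 * M : ℕ) : ℂ)))) :
    ∀ j l : Fin (2 * M), D₂ j l = (D₁ * D₁) j l
      - (-1 : ℂ) ^ ((j : ℕ) + (l : ℕ)) * (1 / ((2 * M : ℕ) : ℂ))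
        * ((((M : ℝ) * μ) ^ (2 * α) : ℝ) : ℂ) := by
  intro j l
  have hN0 : 0 < 2 * M := by omega
  have hNc : ((2 * M : ℕ) : ℂ) ≠ 0 := Nat.cast_ne_zero.mpr hN0.ne'
  set K : Finset ℤ := Finset.Icc (-(M : ℤ)) (M : ℤ) with hK
  set e : ℤ → ℂ := fun d =>
    Complex.exp (2 * (Real.pi : ℂ) * Complex.I * (d : ℂ) / ((2 * M : ℕ) : ℂ)) with he
  set f : ℤ → ℂ := fun k => (1 / c k) * (Complex.I * (((k : ℝ) * μ : ℝ) : ℂ)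
      * ((|(k : ℝ) * μ| ^ (α - 1) : ℝ) : ℂ)) with hf
  set g : ℤ → ℂ := fun k => (1 / c k) * ((|(k : ℝ) * μ| ^ (2 * α) : ℝ) : ℂ) with hg
  have he_mul : ∀ a b : ℤ, e (a + b) = e a * e b := by
    intro a b
    simp only [he, ← Complex.exp_add]
    congr 1
    push_cast
    ring
  have hD₁' : ∀ a b : Fin (2 * M), D₁ a b
      = (1 / ((2 * M : ℕ) : ℂ)) * ∑ k ∈ K, f k * e (k * (((a : ℕ) : ℤ) - ((b : ℕ) : ℤ))) := by
    intro a b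
    rw [hD₁ a b]
    congr 1
    refine Finset.sum_congr rfl fun k _ => ?_
    simp only [hf, he]
    congr 1
    congr 1
    push_cast
    ring
  have hD₂' : D₂ j l
      = -((1 / ((2 * M : ℕ) : ℂ)) * ∑ k ∈ K, g k * e (k * (((j : ℕ) : ℤ) - ((l : ℕ) : ℤ)))) := by
    rw [hD₂ j l]
    congr 2
    refine Finset.sum_congr rfl fun k _ => ?_
    simp only [hg, he]
    congr 1
    congr 1
    push_cast
    ring
  have horth : ∀ d : ℤ, ∑ m : Fin (2 * M), e (d * ((m : ℕ) : ℤ))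
      = if ((2 * M : ℕ) : ℤ) ∣ d then ((2 * M : ℕ) : ℂ) else 0 := by
    intro d
    have h2 : ∑ m : Fin (2 * M), e (d * ((m : ℕ) : ℤ))
        = ∑ m : Fin (2 * M),
            Complex.exp (2 * (Real.pi : ℂ) * Complex.I * d / ((2 * M : ℕ) : ℂ)) ^ (m : ℕ) := by
      refine Finset.sum_congr rfl fun m _ => ?_
      simp only [he]
      rw [← Complex.exp_nat_mul]
      congr 1
      push_cast
      ring
    rw [h2, Fin.sum_univ_eq_sum_range
      (fun m => Complex.exp (2 * (Real.pi : ℂ) * Complex.I * d / ((2 * M : ℕ) : ℂ)) ^ m) (2 * M)]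
    exact geom_orth (2 * M) hN0 d
  -- the product coefficient function
  set a : ℤ → ℤ → ℂ := fun k k' =>
    f k * f k' * e (k * ((j : ℕ) : ℤ) - k' * ((l : ℕ) : ℤ)) with ha
  have hMK : (M : ℤ) ∈ K := Finset.mem_Icc.mpr (by omega)
  have hmMK : (-(M : ℤ)) ∈ K := Finset.mem_Icc.mpr (by omega)
  have hMne : (M : ℤ) ≠ -(M : ℤ) := by omega
  -- scalar facts
  have hα2 : (0:ℝ) < 2 * α := by nlinarith [hα.1]
  have hMμ : (0:ℝ) < (M:ℝ) * μ := by
    have : (0:ℝ) < (M:ℝ) := by exact_mod_cast hM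
    positivity
  have hreal : ∀ x : ℝ, x * x * (|x| ^ (α-1) * |x| ^ (α-1)) = |x| ^ (2*α) := by
    intro x
    rcases eq_or_ne x 0 with rfl | hx
    · simp [Real.zero_rpow (ne_of_gt hα2)]
    · have hx' : 0 < |x| := abs_pos.mpr hx
      have h2 : x * x = |x| ^ (2:ℝ) := by
        rw [show (2:ℝ) = ((2:ℕ):ℝ) by norm_num, Real.rpow_natCast, pow_two,
          abs_mul_abs_self]
      rw [h2, ← Real.rpow_add hx', ← Real.rpow_add hx']
      congr 1
      ring
  have hsq : ∀ k : ℤ, (Complex.I * (((k:ℝ) * μ : ℝ):ℂ) * ((|(k:ℝ) * μ| ^ (α-1) : ℝ):ℂ))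
      * (Complex.I * (((k:ℝ) * μ : ℝ):ℂ) * ((|(k:ℝ) * μ| ^ (α-1) : ℝ):ℂ))
      = -(((|(k:ℝ) * μ| ^ (2*α) : ℝ):ℂ)) := by
    intro k
    calc (Complex.I * (((k:ℝ) * μ : ℝ):ℂ) * ((|(k:ℝ) * μ| ^ (α-1) : ℝ):ℂ))
        * (Complex.I * (((k:ℝ) * μ : ℝ):ℂ) * ((|(k:ℝ) * μ| ^ (α-1) : ℝ):ℂ))
        = (Complex.I * Complex.I) * ((((k:ℝ)*μ) * ((k:ℝ)*μ)
            * (|(k:ℝ)*μ| ^ (α-1) * |(k:ℝ)*μ| ^ (α-1)) : ℝ) : ℂ) := by push_cast; ring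
      _ = -(((|(k:ℝ) * μ| ^ (2*α) : ℝ):ℂ)) := by rw [Complex.I_mul_I, hreal]; ring
  have hcM : c (M:ℤ) = 2 := by rw [hc]; simp
  have hcmM : c (-(M:ℤ)) = 2 := by rw [hc]; simp
  have habs : |(((M:ℤ)):ℝ) * μ| = (M:ℝ) * μ := by
    push_cast
    exact abs_of_pos hMμ
  have habs' : |(((-(M:ℤ)):ℤ):ℝ) * μ| = (M:ℝ) * μ := by
    push_cast
    rw [show -(M:ℝ) * μ = -((M:ℝ) * μ) by ring, abs_neg]
    exact abs_of_pos hMμ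
  set P : ℂ := ((((M : ℝ) * μ) ^ (2 * α) : ℝ) : ℂ) with hP
  have hPabs : ((|(((M:ℤ)):ℝ) * μ| ^ (2*α) : ℝ) : ℂ) = P := by
    rw [hP]
    exact congrArg Complex.ofReal (by rw [habs])
  have hPabs' : ((|(((-(M:ℤ)):ℤ):ℝ) * μ| ^ (2*α) : ℝ) : ℂ) = P := by
    rw [hP]
    exact congrArg Complex.ofReal (by rw [habs'])
  -- values of f and g
  have hfk : ∀ k : ℤ, k ≠ (M:ℤ) → k ≠ -(M:ℤ) → f k * f k
      = -(((|(k:ℝ) * μ| ^ (2*α) : ℝ):ℂ)) := by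
    intro k h1 h2
    have hck : c k = 1 := by rw [hc]; simp [h1, h2]
    simp only [hf, hck]
    linear_combination hsq k
  have hgk : ∀ k : ℤ, k ≠ (M:ℤ) → k ≠ -(M:ℤ) → g k = ((|(k:ℝ) * μ| ^ (2*α) : ℝ):ℂ) := by
    intro k h1 h2
    have hck : c k = 1 := by rw [hc]; simp [h1, h2]
    simp only [hg, hck]
    ring
  have hfMM : f (M:ℤ) * f (M:ℤ) = -((1/4 : ℂ) * P) := by
    simp only [hf, hcM]
    linear_combination (1/4 : ℂ) * hsq (M:ℤ) - (1/4 : ℂ) * hPabs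
  have hfmm : f (-(M:ℤ)) * f (-(M:ℤ)) = -((1/4 : ℂ) * P) := by
    simp only [hf, hcmM]
    linear_combination (1/4 : ℂ) * hsq (-(M:ℤ)) - (1/4 : ℂ) * hPabs'
  have hfM : f (M:ℤ) * f (-(M:ℤ)) = (1/4 : ℂ) * P := by
    simp only [hf, hcM, hcmM]
    have hB : (((((-(M:ℤ)):ℤ):ℝ) * μ : ℝ) : ℂ) = -(((((M:ℤ)):ℝ) * μ : ℝ) : ℂ) := by
      push_cast; ring
    have hY : ((|(((-(M:ℤ)):ℤ):ℝ) * μ| ^ (α-1) : ℝ) : ℂ)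
        = ((|(((M:ℤ)):ℝ) * μ| ^ (α-1) : ℝ) : ℂ) := by
      exact congrArg Complex.ofReal (by rw [show |(((-(M:ℤ)):ℤ):ℝ) * μ| = |(((M:ℤ)):ℝ) * μ|
        from by rw [habs, habs']])
    rw [hB, hY]
    linear_combination (-(1/4) : ℂ) * hsq (M:ℤ) + (1/4 : ℂ) * hPabs
  have hgM : g (M:ℤ) = (1/2 : ℂ) * P := by
    simp only [hg, hcM]
    linear_combination (1/2 : ℂ) * hPabs
  have hgmM : g (-(M:ℤ)) = (1/2 : ℂ) * P := by
    simp only [hg, hcmM]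
    linear_combination (1/2 : ℂ) * hPabs'
  -- sign facts
  have hne1 : (-1 : ℂ) ≠ 0 := by norm_num
  have hsgn : ∀ t : ℤ, e ((M:ℤ) * t) = (-1:ℂ) ^ t := by
    intro t
    simp only [he]
    exact sign_lemma M hM t
  have hsgn' : ∀ t : ℤ, e (-(M:ℤ) * t) = (-1:ℂ) ^ t := by
    intro t
    rw [show -(M:ℤ) * t = (M:ℤ) * (-t) by ring, hsgn, neg_one_zpow_neg]
  have hS : (-1:ℂ) ^ (((j:ℕ):ℤ) + ((l:ℕ):ℤ)) = (-1:ℂ) ^ ((j:ℕ) + (l:ℕ)) := by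
    rw [show ((j:ℕ):ℤ) + ((l:ℕ):ℤ) = (((j:ℕ) + (l:ℕ) : ℕ) : ℤ) by push_cast; ring, zpow_natCast]
  have hS' : (-1:ℂ) ^ (((j:ℕ):ℤ) - ((l:ℕ):ℤ)) = (-1:ℂ) ^ ((j:ℕ) + (l:ℕ)) := by
    rw [sub_eq_add_neg, zpow_add₀ hne1, neg_one_zpow_neg, ← zpow_add₀ hne1, hS]
  -- Step A : the matrix product
  have stepA : (D₁ * D₁) j l = (1 / ((2 * M : ℕ) : ℂ))
      * ((∑ k ∈ K, a k k) + a (M : ℤ) (-(M : ℤ)) + a (-(M : ℤ)) (M : ℤ)) := by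
    have key : ∀ k ∈ K, ∀ k' ∈ K,
        a k k' * (if ((2 * M : ℕ) : ℤ) ∣ (k' - k) then ((2 * M : ℕ) : ℂ) else 0)
        = (if k' = k then a k k' * ((2 * M : ℕ) : ℂ) else 0)
        + (if k = (M:ℤ) ∧ k' = -(M:ℤ) then a (M:ℤ) (-(M:ℤ)) * ((2 * M : ℕ) : ℂ) else 0)
        + (if k = -(M:ℤ) ∧ k' = (M:ℤ) then a (-(M:ℤ)) (M:ℤ) * ((2 * M : ℕ) : ℂ) else 0) := by
      intro k hk k' hk'
      rw [hK, Finset.mem_Icc] at hk hk'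
      have hchar := dvd_char M hM k k' hk.1 hk.2 hk'.1 hk'.2
      by_cases h1 : k' = k
      · subst h1
        rw [if_pos rfl, if_pos (hchar.mpr (Or.inl rfl)),
          if_neg (by rintro ⟨rfl, h⟩; omega), if_neg (by rintro ⟨rfl, h⟩; omega)]
        ring
      · rw [if_neg h1]
        by_cases h2 : k = (M:ℤ) ∧ k' = -(M:ℤ)
        · obtain ⟨rfl, rfl⟩ := h2
          have hdv : ((2 * M : ℕ) : ℤ) ∣ (-(M:ℤ) - (M:ℤ)) :=
            hchar.mpr (Or.inr (Or.inl ⟨rfl, rfl⟩))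
          rw [if_pos hdv,
            if_pos (show (M:ℤ) = (M:ℤ) ∧ -(M:ℤ) = -(M:ℤ) from ⟨rfl, rfl⟩),
            if_neg (show ¬((M:ℤ) = -(M:ℤ) ∧ -(M:ℤ) = (M:ℤ)) from by rintro ⟨h, _⟩; omega)]
          ring
        · rw [if_neg h2]
          by_cases h3 : k = -(M:ℤ) ∧ k' = (M:ℤ)
          · obtain ⟨rfl, rfl⟩ := h3
            have hdv : ((2 * M : ℕ) : ℤ) ∣ ((M:ℤ) - (-(M:ℤ))) :=
              hchar.mpr (Or.inr (Or.inr ⟨rfl, rfl⟩))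
            rw [if_pos hdv,
              if_pos (show -(M:ℤ) = -(M:ℤ) ∧ (M:ℤ) = (M:ℤ) from ⟨rfl, rfl⟩)]
            ring
          · have hnd : ¬ ((2 * M : ℕ) : ℤ) ∣ (k' - k) := by
              intro hd
              rcases hchar.mp hd with h | h | h
              · exact h1 h
              · exact h2 h
              · exact h3 h
            rw [if_neg h3, if_neg hnd]
            ring
    have hterm : ∀ (m : Fin (2 * M)) (k k' : ℤ),
        (f k * e (k * (((j:ℕ):ℤ) - ((m:ℕ):ℤ)))) * (f k' * e (k' * (((m:ℕ):ℤ) - ((l:ℕ):ℤ))))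
        = a k k' * e ((k' - k) * ((m:ℕ):ℤ)) := by
      intro m k k'
      calc (f k * e (k * (((j:ℕ):ℤ) - ((m:ℕ):ℤ))))
            * (f k' * e (k' * (((m:ℕ):ℤ) - ((l:ℕ):ℤ))))
          = f k * f k' * (e (k * (((j:ℕ):ℤ) - ((m:ℕ):ℤ)))
              * e (k' * (((m:ℕ):ℤ) - ((l:ℕ):ℤ)))) := by ring
        _ = f k * f k' * e (k * (((j:ℕ):ℤ) - ((m:ℕ):ℤ))
              + k' * (((m:ℕ):ℤ) - ((l:ℕ):ℤ))) := by rw [he_mul]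
        _ = f k * f k' * e ((k * ((j:ℕ):ℤ) - k' * ((l:ℕ):ℤ)) + (k' - k) * ((m:ℕ):ℤ)) := by
            rw [show k * (((j:ℕ):ℤ) - ((m:ℕ):ℤ)) + k' * (((m:ℕ):ℤ) - ((l:ℕ):ℤ))
              = (k * ((j:ℕ):ℤ) - k' * ((l:ℕ):ℤ)) + (k' - k) * ((m:ℕ):ℤ) by ring]
        _ = f k * f k' * (e (k * ((j:ℕ):ℤ) - k' * ((l:ℕ):ℤ)) * e ((k' - k) * ((m:ℕ):ℤ))) := by
            rw [he_mul]
        _ = a k k' * e ((k' - k) * ((m:ℕ):ℤ)) := by simp only [ha]; ring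
    have h1 : ∀ m : Fin (2 * M), D₁ j m * D₁ m l
        = ∑ k ∈ K, ∑ k' ∈ K, (1 / ((2 * M : ℕ) : ℂ)) * (1 / ((2 * M : ℕ) : ℂ))
            * (a k k' * e ((k' - k) * ((m:ℕ):ℤ))) := by
      intro m
      rw [hD₁' j m, hD₁' m l, mul_mul_mul_comm, Finset.sum_mul_sum, Finset.mul_sum]
      refine Finset.sum_congr rfl fun k _ => ?_
      rw [Finset.mul_sum]
      refine Finset.sum_congr rfl fun k' _ => ?_
      rw [hterm m k k', mul_assoc]
    have h2 : (D₁ * D₁) j l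
        = ∑ k ∈ K, ∑ k' ∈ K, (1 / ((2 * M : ℕ) : ℂ)) * (1 / ((2 * M : ℕ) : ℂ))
            * (a k k' * (if ((2 * M : ℕ) : ℤ) ∣ (k' - k) then ((2 * M : ℕ) : ℂ) else 0)) := by
      rw [Matrix.mul_apply, Finset.sum_congr rfl fun m _ => h1 m, Finset.sum_comm]
      refine Finset.sum_congr rfl fun k _ => ?_
      rw [Finset.sum_comm]
      refine Finset.sum_congr rfl fun k' _ => ?_
      rw [← Finset.mul_sum, ← Finset.mul_sum, horth (k' - k)]
    rw [h2]
    have h3 : ∀ k ∈ K, ∑ k' ∈ K, (1 / ((2 * M : ℕ) : ℂ)) * (1 / ((2 * M : ℕ) : ℂ))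
            * (a k k' * (if ((2 * M : ℕ) : ℤ) ∣ (k' - k) then ((2 * M : ℕ) : ℂ) else 0))
        = (1 / ((2 * M : ℕ) : ℂ)) * a k k
          + (if k = (M:ℤ) then (1 / ((2 * M : ℕ) : ℂ)) * a (M:ℤ) (-(M:ℤ)) else 0)
          + (if k = -(M:ℤ) then (1 / ((2 * M : ℕ) : ℂ)) * a (-(M:ℤ)) (M:ℤ) else 0) := by
      intro k hk
      have hC : (1 / ((2 * M : ℕ) : ℂ)) * (1 / ((2 * M : ℕ) : ℂ)) * ((2 * M : ℕ) : ℂ)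
          = 1 / ((2 * M : ℕ) : ℂ) := by field_simp
      calc ∑ k' ∈ K, (1 / ((2 * M : ℕ) : ℂ)) * (1 / ((2 * M : ℕ) : ℂ))
              * (a k k' * (if ((2 * M : ℕ) : ℤ) ∣ (k' - k) then ((2 * M : ℕ) : ℂ) else 0))
          = ∑ k' ∈ K,
              ((if k' = k then (1 / ((2 * M : ℕ) : ℂ)) * (1 / ((2 * M : ℕ) : ℂ))
                  * (a k k' * ((2 * M : ℕ) : ℂ)) else 0)
              + (if k = (M:ℤ) ∧ k' = -(M:ℤ) then (1 / ((2 * M : ℕ) : ℂ))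
                  * (1 / ((2 * M : ℕ) : ℂ)) * (a (M:ℤ) (-(M:ℤ)) * ((2 * M : ℕ) : ℂ)) else 0)
              + (if k = -(M:ℤ) ∧ k' = (M:ℤ) then (1 / ((2 * M : ℕ) : ℂ))
                  * (1 / ((2 * M : ℕ) : ℂ)) * (a (-(M:ℤ)) (M:ℤ) * ((2 * M : ℕ) : ℂ)) else 0)) := by
            refine Finset.sum_congr rfl fun k' hk' => ?_
            rw [key k hk k' hk', mul_add, mul_add, mul_ite, mul_zero, mul_ite, mul_zero,
              mul_ite, mul_zero]
        _ = _ := by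
            rw [Finset.sum_add_distrib, Finset.sum_add_distrib]
            congr 1
            · congr 1
              · rw [Finset.sum_ite_eq' K k
                  (fun k' => (1 / ((2 * M : ℕ) : ℂ)) * (1 / ((2 * M : ℕ) : ℂ))
                    * (a k k' * ((2 * M : ℕ) : ℂ))), if_pos hk]
                rw [show (1 / ((2 * M : ℕ) : ℂ)) * (1 / ((2 * M : ℕ) : ℂ))
                    * (a k k * ((2 * M : ℕ) : ℂ))
                  = ((1 / ((2 * M : ℕ) : ℂ)) * (1 / ((2 * M : ℕ) : ℂ)) * ((2 * M : ℕ) : ℂ))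
                    * a k k by ring, hC]
              · by_cases hkM : k = (M:ℤ)
                · simp only [hkM, true_and, if_pos rfl]
                  rw [Finset.sum_ite_eq' K (-(M:ℤ))
                    (fun _ => (1 / ((2 * M : ℕ) : ℂ)) * (1 / ((2 * M : ℕ) : ℂ))
                      * (a (M:ℤ) (-(M:ℤ)) * ((2 * M : ℕ) : ℂ))), if_pos hmMK]
                  rw [show (1 / ((2 * M : ℕ) : ℂ)) * (1 / ((2 * M : ℕ) : ℂ))
                      * (a (M:ℤ) (-(M:ℤ)) * ((2 * M : ℕ) : ℂ))
                    = ((1 / ((2 * M : ℕ) : ℂ)) * (1 / ((2 * M : ℕ) : ℂ)) * ((2 * M : ℕ) : ℂ))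
                      * a (M:ℤ) (-(M:ℤ)) by ring, hC]
                  simp
                · simp [hkM]
            · by_cases hkM : k = -(M:ℤ)
              · simp only [hkM, true_and, if_pos rfl]
                rw [Finset.sum_ite_eq' K (M:ℤ)
                  (fun _ => (1 / ((2 * M : ℕ) : ℂ)) * (1 / ((2 * M : ℕ) : ℂ))
                    * (a (-(M:ℤ)) (M:ℤ) * ((2 * M : ℕ) : ℂ))), if_pos hMK]
                rw [show (1 / ((2 * M : ℕ) : ℂ)) * (1 / ((2 * M : ℕ) : ℂ))
                    * (a (-(M:ℤ)) (M:ℤ) * ((2 * M : ℕ) : ℂ))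
                  = ((1 / ((2 * M : ℕ) : ℂ)) * (1 / ((2 * M : ℕ) : ℂ)) * ((2 * M : ℕ) : ℂ))
                    * a (-(M:ℤ)) (M:ℤ) by ring, hC]
                simp
              · simp [hkM]
    rw [Finset.sum_congr rfl h3, Finset.sum_add_distrib, Finset.sum_add_distrib,
      Finset.sum_ite_eq' K (M:ℤ) (fun _ => (1 / ((2 * M : ℕ) : ℂ)) * a (M:ℤ) (-(M:ℤ))),
      Finset.sum_ite_eq' K (-(M:ℤ)) (fun _ => (1 / ((2 * M : ℕ) : ℂ)) * a (-(M:ℤ)) (M:ℤ)),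
      if_pos hMK, if_pos hmMK, ← Finset.mul_sum]
    ring
  -- Step B : sum of diagonal terms vs D₂ sum
  have stepB : (∑ k ∈ K, a k k) + ∑ k ∈ K, g k * e (k * (((j : ℕ) : ℤ) - ((l : ℕ) : ℤ)))
      = (1/2 : ℂ) * P * (-1 : ℂ) ^ ((j : ℕ) + (l : ℕ)) := by
    have hakk : ∀ k : ℤ, a k k = f k * f k * e (k * (((j:ℕ):ℤ) - ((l:ℕ):ℤ))) := by
      intro k
      simp only [ha]
      rw [show k * ((j:ℕ):ℤ) - k * ((l:ℕ):ℤ) = k * (((j:ℕ):ℤ) - ((l:ℕ):ℤ)) by ring]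
    have hpt : ∀ k ∈ K, a k k + g k * e (k * (((j:ℕ):ℤ) - ((l:ℕ):ℤ)))
        = (if k = (M:ℤ) then (1/4:ℂ) * P * e ((M:ℤ) * (((j:ℕ):ℤ) - ((l:ℕ):ℤ))) else 0)
        + (if k = -(M:ℤ) then (1/4:ℂ) * P * e (-(M:ℤ) * (((j:ℕ):ℤ) - ((l:ℕ):ℤ))) else 0) := by
      intro k _
      by_cases h1 : k = (M:ℤ)
      · subst h1
        rw [if_pos rfl, if_neg hMne, hakk, hfMM, hgM]
        ring
      · by_cases h2 : k = -(M:ℤ)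
        · subst h2
          rw [if_neg (by omega), if_pos rfl, hakk, hfmm, hgmM]
          ring
        · rw [if_neg h1, if_neg h2, hakk, hfk k h1 h2, hgk k h1 h2]
          ring
    rw [← Finset.sum_add_distrib, Finset.sum_congr rfl hpt, Finset.sum_add_distrib,
      Finset.sum_ite_eq' K (M:ℤ)
        (fun _ => (1/4:ℂ) * P * e ((M:ℤ) * (((j:ℕ):ℤ) - ((l:ℕ):ℤ)))),
      Finset.sum_ite_eq' K (-(M:ℤ))
        (fun _ => (1/4:ℂ) * P * e (-(M:ℤ) * (((j:ℕ):ℤ) - ((l:ℕ):ℤ)))),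
      if_pos hMK, if_pos hmMK, hsgn, hsgn', hS']
    ring
  -- cross terms
  have hcross : a (M : ℤ) (-(M : ℤ)) + a (-(M : ℤ)) (M : ℤ)
      = (1/2 : ℂ) * P * (-1 : ℂ) ^ ((j : ℕ) + (l : ℕ)) := by
    simp only [ha]
    rw [show (M:ℤ) * ((j:ℕ):ℤ) - (-(M:ℤ)) * ((l:ℕ):ℤ)
        = (M:ℤ) * (((j:ℕ):ℤ) + ((l:ℕ):ℤ)) by ring,
      show (-(M:ℤ)) * ((j:ℕ):ℤ) - (M:ℤ) * ((l:ℕ):ℤ)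
        = -(M:ℤ) * (((j:ℕ):ℤ) + ((l:ℕ):ℤ)) by ring,
      hsgn, hsgn', hS, hfM, show f (-(M:ℤ)) * f (M:ℤ) = (1/4 : ℂ) * P by rw [mul_comm]; exact hfM]
    ring
  rw [hD₂', stepA]
  rw [show (∑ k ∈ K, a k k) + a (M : ℤ) (-(M : ℤ)) + a (-(M : ℤ)) (M : ℤ)
      = (∑ k ∈ K, a k k) + (a (M : ℤ) (-(M : ℤ)) + a (-(M : ℤ)) (M : ℤ)) by ring, hcross]
  have hsum : ∑ k ∈ K, a k k
      = (1/2 : ℂ) * P * (-1 : ℂ) ^ ((j : ℕ) + (l : ℕ))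
        - ∑ k ∈ K, g k * e (k * (((j : ℕ) : ℤ) - ((l : ℕ) : ℤ))) := by
    linear_combination stepB
  rw [hsum]
  ring
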